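/- If X ∈ {0,1}^{N×N} is positive semidefinite with rank(X) ≤ r, then there exists G ∈ ℝ^{N×r} with X = GGᵀ such that every row of G is either the zero vector or a unit vector, and any two distinct nonzero rows of G are either equal or orthogonal. -/
import Mathlib


open Finset Matrix

/-- a 0-1 PSD matrix of rank at most r factors as G·Gᵀ where every
row of G is zero or a unit vector, and distinct nonzero rows are equal or
orthogonal. -/
theorem stmt_3 (N r : ℕ) (X : Matrix (Fin N) (Fin N) ℝ)
    (hbin : ∀ i j, X i j = 0 ∨ X i j = 1)
    (hpsd : X.PosSemidef) (hrank : X.rank ≤ r) :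
    ∃ G : Matrix (Fin N) (Fin r) ℝ,
      X = G * G.transpose ∧
      (∀ i, (∀ k, G i k = 0) ∨ ∑ k, G i k ^ 2 = 1) ∧
      (∀ i j, i ≠ j → (∀ k, G i k = G j k) ∨ ∑ k, G i k * G j k = 0) := by
  classical
  -- symmetry
  have hsym : ∀ i j, X i j = X j i := by
    intro i j
    have := hpsd.1.apply i j
    simpa using this.symm
  -- zero diagonal implies zero row
  have rowzero : ∀ i, X i i = 0 → ∀ k, X i k = 0 := by
    intro i h0 k
    have hmv : X *ᵥ (Pi.single i 1) = 0 := by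
      apply (hpsd.dotProduct_mulVec_zero_iff (Pi.single i 1)).1
      have h1 : X *ᵥ (Pi.single i 1) = fun l => X l i := by
        funext l
        simp [Matrix.mulVec, dotProduct, Pi.single_apply, mul_ite]
      rw [h1]
      simp [dotProduct, Pi.single_apply, ite_mul, h0]
    have := congrFun hmv k
    have h1 : (X *ᵥ (Pi.single i 1)) k = X k i := by
      simp [Matrix.mulVec, dotProduct, Pi.single_apply, mul_ite]
    rw [h1] at this
    rw [hsym i k]
    simpa using this
  -- entries are 0 unless diagonal entries are 1
  have diagone : ∀ i j, X i j = 1 → X i i = 1 := by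
    intro i j h
    rcases hbin i i with h0 | h1
    · exfalso
      have := rowzero i h0 j
      rw [h] at this; norm_num at this
    · exact h1
  -- X i j = 1 implies row i = row j
  have roweq : ∀ i j, X i j = 1 → ∀ k, X i k = X j k := by
    intro i j hij k
    have hii := diagone i j hij
    have hji : X j i = 1 := by rw [← hsym]; exact hij
    have hjj := diagone j i hji
    set v : Fin N → ℝ := Pi.single i 1 - Pi.single j 1 with hv
    have hmv1 : X *ᵥ v = fun l => X l i - X l j := by
      funext l
      simp [hv, Matrix.mulVec, dotProduct, Pi.single_apply, mul_sub, mul_ite,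
        Finset.sum_sub_distrib]
    have hmv : X *ᵥ v = 0 := by
      apply (hpsd.dotProduct_mulVec_zero_iff v).1
      rw [hmv1]
      have : (star v ⬝ᵥ fun l => X l i - X l j) =
          (X i i - X i j) - (X j i - X j j) := by
        simp [hv, dotProduct, Pi.single_apply, ite_mul, sub_mul,
          Finset.sum_sub_distrib]
      rw [this, hii, hjj, hij, hji]
      ring
    have := congrFun hmv k
    rw [hmv1] at this
    have hk : X k i - X k j = 0 := this
    rw [hsym i k, hsym j k]
    linarith
  -- the representative function
  set Rs : Fin N → Finset (Fin N) := fun i => Finset.univ.filter (fun j => X i j = 1)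
    with hRs
  set rep : Fin N → Fin N := fun i =>
    if h : (Rs i).Nonempty then (Rs i).min' h else i with hrep
  have hRseq : ∀ i j, X i j = 1 → Rs i = Rs j := by
    intro i j hij
    ext l
    simp only [hRs, Finset.mem_filter, Finset.mem_univ, true_and]
    rw [roweq i j hij l]
  have hrepeq : ∀ i j, X i j = 1 → rep i = rep j := by
    intro i j hij
    have hnei : (Rs i).Nonempty := ⟨j, by simp [hRs, hij]⟩
    have hnej : (Rs j).Nonempty := by rw [← hRseq i j hij]; exact hnei
    simp only [hrep]
    rw [dif_pos hnei, dif_pos hnej]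
    congr 1
    exact hRseq i j hij
  have hrepone : ∀ i, X i i = 1 → X i (rep i) = 1 := by
    intro i hi
    have hne : (Rs i).Nonempty := ⟨i, by simp [hRs, hi]⟩
    have : rep i ∈ Rs i := by
      simp only [hrep, dif_pos hne]
      exact (Rs i).min'_mem hne
    simpa [hRs] using this
  have hrepdiag : ∀ i, X i i = 1 → X (rep i) (rep i) = 1 := by
    intro i hi
    exact diagone (rep i) i (by rw [← hsym]; exact hrepone i hi)
  have hrepidem : ∀ i, X i i = 1 → rep (rep i) = rep i := by
    intro i hi
    exact (hrepeq i (rep i) (hrepone i hi)).symm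
  -- equivalence characterization
  have hiff : ∀ i j, X i j = 1 ↔ X i i = 1 ∧ X j j = 1 ∧ rep i = rep j := by
    intro i j
    constructor
    · intro h
      exact ⟨diagone i j h, diagone j i (by rw [← hsym]; exact h),
        hrepeq i j h⟩
    · rintro ⟨hi, hj, hr⟩
      have h1 : X j (rep i) = 1 := by rw [hr]; exact hrepone j hj
      have h2 : X (rep i) j = 1 := by rw [← hsym]; exact h1
      calc X i j = X (rep i) j := roweq i (rep i) (hrepone i hi) j
        _ = 1 := h2
  -- the set of representatives
  set R : Finset (Fin N) := Finset.univ.filter (fun c => X c c = 1 ∧ rep c = c) with hR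
  have hrepR : ∀ i, X i i = 1 → rep i ∈ R := by
    intro i hi
    simp only [hR, Finset.mem_filter, Finset.mem_univ, true_and]
    exact ⟨hrepdiag i hi, hrepidem i hi⟩
  have hRkey : ∀ c ∈ R, ∀ c' ∈ R, X c c' = 1 ↔ c = c' := by
    intro c hc c' hc'
    simp only [hR, Finset.mem_filter, Finset.mem_univ, true_and] at hc hc'
    constructor
    · intro h
      have := (hiff c c').1 h
      rw [← hc.2, ← hc'.2]
      exact this.2.2
    · intro h; rw [h]; exact hc'.1
  -- rank bound: R.card ≤ r
  set m := R.card with hm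
  set e : {x // x ∈ R} ≃ Fin m := R.equivFin with he
  set f : Fin m → Fin N := fun a => (e.symm a : Fin N) with hf
  have hfR : ∀ a, f a ∈ R := fun a => (e.symm a).2
  have hli : LinearIndependent ℝ (fun a : Fin m => X (f a)) := by
    rw [Fintype.linearIndependent_iff]
    intro g hg a
    have := congrFun hg (f a)
    simp only [Finset.sum_apply, Pi.smul_apply, smul_eq_mul, Pi.zero_apply] at this
    have hterm : ∀ b : Fin m, g b * X (f b) (f a) = if b = a then g b else 0 := by
      intro b
      by_cases hba : b = a
      · subst hba
        have : X (f b) (f b) = 1 := (hRkey (f b) (hfR b) (f b) (hfR b)).2 rfl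
        simp [this]
      · have hne : f b ≠ f a := by
          intro hfe
          exact hba (e.symm.injective (Subtype.ext hfe))
        have : X (f b) (f a) = 0 := by
          rcases hbin (f b) (f a) with h0 | h1
          · exact h0
          · exact absurd ((hRkey (f b) (hfR b) (f a) (hfR a)).1 h1) hne
        simp [this, hba]
    rw [Finset.sum_congr rfl (fun b _ => hterm b)] at this
    simpa using this
  have hmr : m ≤ r := by
    have h1 : m = Set.finrank ℝ (Set.range fun a : Fin m => X (f a)) := by
      have := linearIndependent_iff_card_eq_finrank_span.mp hli
      simpa using this
    have h2 : Submodule.span ℝ (Set.range fun a : Fin m => X (f a)) ≤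
        Submodule.span ℝ (Set.range X) := by
      apply Submodule.span_mono
      rintro _ ⟨a, rfl⟩
      exact ⟨f a, rfl⟩
    have h3 : Set.finrank ℝ (Set.range fun a : Fin m => X (f a)) ≤
        Set.finrank ℝ (Set.range X) := Submodule.finrank_mono h2
    have h4 : X.rank = Set.finrank ℝ (Set.range X) := X.rank_eq_finrank_span_row
    omega
  -- the column assignment
  set col : {i // X i i = 1} → Fin r :=
    fun i => Fin.castLE hmr (e ⟨rep i.1, hrepR i.1 i.2⟩) with hcol
  have hcoliff : ∀ (i j : {i // X i i = 1}), col i = col j ↔ rep i.1 = rep j.1 := by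
    intro i j
    constructor
    · intro h
      have h2 : e ⟨rep i.1, hrepR i.1 i.2⟩ = e ⟨rep j.1, hrepR j.1 j.2⟩ :=
        Fin.castLE_injective hmr h
      have := e.injective h2
      exact congrArg Subtype.val this
    · intro h
      simp only [hcol]
      have hs : (⟨rep i.1, hrepR i.1 i.2⟩ : {x // x ∈ R}) = ⟨rep j.1, hrepR j.1 j.2⟩ :=
        Subtype.ext h
      rw [hs]
  -- the matrix G
  set G : Matrix (Fin N) (Fin r) ℝ := fun i k =>
    if h : X i i = 1 then (if col ⟨i, h⟩ = k then 1 else 0) else 0 with hG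
  have hGG : ∀ i j, ∑ k, G i k * G j k = X i j := by
    intro i j
    by_cases hi : X i i = 1
    · by_cases hj : X j j = 1
      · have hGi : ∀ k, G i k = if col ⟨i, hi⟩ = k then 1 else 0 := fun k => dif_pos hi
        have hGj : ∀ k, G j k = if col ⟨j, hj⟩ = k then 1 else 0 := fun k => dif_pos hj
        simp only [hGi, hGj, ite_mul, one_mul, zero_mul]
        rw [Finset.sum_ite_eq]
        by_cases hr : rep i = rep j
        · have hc : col ⟨i, hi⟩ = col ⟨j, hj⟩ := (hcoliff _ _).2 hr
          have hx : X i j = 1 := (hiff i j).2 ⟨hi, hj, hr⟩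
          simp [hc, hx]
        · have hc : col ⟨i, hi⟩ ≠ col ⟨j, hj⟩ := fun h => hr ((hcoliff _ _).1 h)
          have hx : X i j = 0 := by
            rcases hbin i j with h0 | h1
            · exact h0
            · exact absurd ((hiff i j).1 h1).2.2 hr
          simp [Ne.symm hc, hx]
      · have hj0 : X j j = 0 := (hbin j j).resolve_right hj
        have hx : X i j = 0 := by rw [hsym]; exact rowzero j hj0 i
        have hGj : ∀ k, G j k = 0 := fun k => dif_neg hj
        simp [hGj, hx]
    · have hi0 : X i i = 0 := (hbin i i).resolve_right hi
      have hx : X i j = 0 := rowzero i hi0 j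
      have hGi : ∀ k, G i k = 0 := fun k => dif_neg hi
      simp [hGi, hx]
  refine ⟨G, ?_, ?_, ?_⟩
  · ext i j
    rw [Matrix.mul_apply]
    simp only [Matrix.transpose_apply]
    exact (hGG i j).symm
  · intro i
    by_cases hi : X i i = 1
    · right
      have : ∑ k, G i k ^ 2 = ∑ k, G i k * G i k := by
        apply Finset.sum_congr rfl; intro k _; ring
      rw [this, hGG i i, hi]
    · left
      exact fun k => dif_neg hi
  · intro i j _
    by_cases h : X i i = 1 ∧ X j j = 1 ∧ rep i = rep j
    · left
      intro k
      have hc : col ⟨i, h.1⟩ = col ⟨j, h.2.1⟩ := (hcoliff _ _).2 h.2.2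
      simp only [hG, dif_pos h.1, dif_pos h.2.1, hc]
    · right
      rw [hGG i j]
      rcases hbin i j with h0 | h1
      · exact h0
      · exact absurd ((hiff i j).1 h1) h
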